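/- Let f = P/Q ∈ ℚ(x) with P, Q ∈ ℤ[x], Q(0) ≠ 0, and suppose the Taylor coefficients a_n of f satisfy a_{np} ≡ a_n (mod p) for almost all primes p. Then all poles of f are simple. -/

import Mathlib

open Polynomial Finset

namespace GaussCong

variable {R : Type*} [CommRing R]

/-- the `r`-th `p`-section of a polynomial -/
noncomputable def psect (p r : ℕ) (B : R[X]) : R[X] :=
  ∑ i ∈ Finset.range (B.natDegree + 1), monomial i (B.coeff (i * p + r))

lemma coeff_psect {p : ℕ} (hp : 0 < p) (r : ℕ) (B : R[X]) (n : ℕ) :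
    (psect p r B).coeff n = B.coeff (n * p + r) := by
  rw [psect, finset_sum_coeff]
  simp only [coeff_monomial]
  rw [Finset.sum_ite_eq' (Finset.range (B.natDegree + 1))]
  split_ifs with h
  · rfl
  · rw [Finset.mem_range, not_lt] at h
    rw [eq_comm, Polynomial.coeff_eq_zero_of_natDegree_lt]
    calc B.natDegree < n := by omega
    _ ≤ n * p := Nat.le_mul_of_pos_right n hp
    _ ≤ n * p + r := Nat.le_add_right _ _

lemma coeff_sum_sections {p : ℕ} (hp : 0 < p) (Rr : ℕ → R[X]) (n : ℕ) :
    (∑ r ∈ range p, expand R p (Rr r) * X ^ r).coeff n = (Rr (n % p)).coeff (n / p) := by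
  rw [finset_sum_coeff]
  rw [Finset.sum_eq_single (n % p)]
  · rw [coeff_mul_X_pow', if_pos (Nat.mod_le n p), coeff_expand hp,
      if_pos ⟨n / p, by have := Nat.mod_add_div n p; omega⟩]
    congr 1
    have := Nat.mod_add_div n p
    have h2 : n - n % p = p * (n / p) := by omega
    rw [h2, Nat.mul_div_cancel_left _ hp]
  · intro r hr hne
    rw [coeff_mul_X_pow']
    split_ifs with h1
    · rw [coeff_expand hp, if_neg]
      rintro ⟨t, ht⟩
      apply hne
      have hrp : r < p := Finset.mem_range.mp hr
      have hn : n = r + p * t := by omega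
      rw [hn, Nat.add_mul_mod_self_left, Nat.mod_eq_of_lt hrp]
    · rfl
  · intro hnot
    exact absurd (Finset.mem_range.mpr (Nat.mod_lt n hp)) hnot

lemma psect_decomp {p : ℕ} (hp : 0 < p) (B : R[X]) :
    ∑ r ∈ range p, expand R p (psect p r B) * X ^ r = B := by
  ext n
  rw [coeff_sum_sections hp, coeff_psect hp]
  congr 1
  conv_lhs => rw [mul_comm]
  exact Nat.div_add_mod n p

lemma coeff_coe_poly_mul (Cp : R[X]) (H : PowerSeries R) (n : ℕ) :
    PowerSeries.coeff n ((Cp : PowerSeries R) * H)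
      = ∑ i ∈ range (n + 1), Cp.coeff i * PowerSeries.coeff (n - i) H := by
  rw [PowerSeries.coeff_mul, Finset.Nat.sum_antidiagonal_eq_sum_range_succ_mk]
  simp [Polynomial.coeff_coe]

lemma coeff_expand_coe_mul {p : ℕ} (hp : 0 < p) (Cp : R[X]) (H : PowerSeries R) (n : ℕ) :
    PowerSeries.coeff (n * p) (((expand R p Cp : R[X]) : PowerSeries R) * H)
      = ∑ i ∈ range (n + 1), Cp.coeff i * PowerSeries.coeff ((n - i) * p) H := by
  rw [coeff_coe_poly_mul]
  have himg : (range (n+1)).image (· * p) ⊆ range (n * p + 1) := by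
    intro x hx
    simp only [Finset.mem_image, Finset.mem_range] at hx ⊢
    obtain ⟨i, hi, rfl⟩ := hx
    have : i * p ≤ n * p := Nat.mul_le_mul_right p (by omega)
    omega
  rw [← Finset.sum_subset himg]
  · rw [Finset.sum_image (by intro a _ b _ h; exact Nat.eq_of_mul_eq_mul_right hp h)]
    apply Finset.sum_congr rfl
    intro i hi
    rw [coeff_expand_mul hp, Nat.sub_mul]
  · intro i hi hni
    rw [Finset.mem_range] at hi
    rw [coeff_expand hp, if_neg, zero_mul]
    rintro ⟨t, rfl⟩
    apply hni
    simp only [Finset.mem_image, Finset.mem_range]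
    have h1 : p * t ≤ p * n := by rw [mul_comm p n]; omega
    have h2 : t ≤ n := Nat.le_of_mul_le_mul_left h1 hp
    exact ⟨t, by omega, by ring⟩

end GaussCong

namespace GaussCong

theorem core {p : ℕ} (hp : p.Prime) (N D : Polynomial (ZMod p)) (F : PowerSeries (ZMod p))
    (hFD : F * (D : PowerSeries (ZMod p)) = (N : PowerSeries (ZMod p)))
    (hcop : IsCoprime N D)
    (hcong : ∀ n : ℕ, PowerSeries.coeff (n * p) F = PowerSeries.coeff n F) :
    Squarefree D := by
  haveI : Fact p.Prime := ⟨hp⟩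
  have hp0 : 0 < p := hp.pos
  by_contra hsf
  rw [Squarefree] at hsf
  push_neg at hsf
  obtain ⟨w₀, hw₀d, hw₀u⟩ := hsf
  have hD0 : D ≠ 0 := by
    rintro rfl
    rw [isCoprime_zero_right] at hcop
    rw [Polynomial.coe_zero, mul_zero] at hFD
    rw [eq_comm, Polynomial.coe_eq_zero_iff] at hFD
    rw [hFD] at hcop
    exact not_isUnit_zero hcop
  have hw₀0 : w₀ ≠ 0 := by
    rintro rfl
    exact hD0 (zero_dvd_iff.mp (by simpa using hw₀d))
  have hl0 : w₀.leadingCoeff ≠ 0 := leadingCoeff_ne_zero.mpr hw₀0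
  set w := w₀ * C w₀.leadingCoeff⁻¹ with hwdef
  have hwm : w.Monic := monic_mul_leadingCoeff_inv hw₀0
  have hCu : IsUnit (C w₀.leadingCoeff⁻¹) := isUnit_C.mpr (inv_ne_zero hl0).isUnit
  have hwd : w * w ∣ D := by
    have heq : w * w = (w₀ * w₀) * (C w₀.leadingCoeff⁻¹ * C w₀.leadingCoeff⁻¹) := by ring
    rw [heq]
    exact (hCu.mul hCu).mul_right_dvd.mpr hw₀d
  have hwu : ¬ IsUnit w := by
    intro hu
    apply hw₀u
    have heq : w₀ = w * C w₀.leadingCoeff := by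
      rw [hwdef, mul_assoc, ← C_mul, inv_mul_cancel₀ hl0, C_1, mul_one]
    rw [heq]
    exact hu.mul (isUnit_C.mpr hl0.isUnit)
  have hd1 : 1 ≤ w.natDegree := by
    rcases Nat.eq_zero_or_pos w.natDegree with h | h
    · exact absurd (hwm.natDegree_eq_zero.mp h ▸ isUnit_one) hwu
    · exact h
  set B := N * D ^ (p - 1) with hB
  have hser : (B : PowerSeries (ZMod p)) =
      ((expand (ZMod p) p D : Polynomial (ZMod p)) : PowerSeries (ZMod p)) * F := by
    rw [ZMod.expand_card]
    rw [hB, Polynomial.coe_mul, Polynomial.coe_pow, Polynomial.coe_pow, ← hFD]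
    have hpow : (D : PowerSeries (ZMod p)) ^ p
        = (D : PowerSeries (ZMod p)) ^ (p - 1) * (D : PowerSeries (ZMod p)) := by
      rw [← pow_succ]
      congr 1
      omega
    rw [hpow]
    ring
  have hBN : ∀ n : ℕ, B.coeff (n * p) = N.coeff n := by
    intro n
    have h1 : PowerSeries.coeff (n*p) (B : PowerSeries (ZMod p)) = B.coeff (n*p) :=
      Polynomial.coeff_coe _ _
    rw [← h1, hser, coeff_expand_coe_mul hp0]
    rw [Finset.sum_congr rfl (fun i _ => by rw [hcong (n - i)] :
      ∀ i ∈ range (n+1), D.coeff i * PowerSeries.coeff ((n-i)*p) F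
        = D.coeff i * PowerSeries.coeff (n-i) F)]
    rw [← coeff_coe_poly_mul]
    rw [show (D : PowerSeries (ZMod p)) * F = (N : PowerSeries (ZMod p)) by rw [mul_comm]; exact hFD]
    exact Polynomial.coeff_coe _ _
  have hsect0 : psect p 0 B = N := by
    ext n
    rw [coeff_psect hp0, Nat.add_zero, hBN]
  set Rr := fun r => (psect p r B) %ₘ w with hRr
  have hwpB : w ^ p ∣ B := by
    have h2 : w ^ 2 ∣ D := by rw [sq]; exact hwd
    have h4 : (w ^ 2) ^ (p-1) ∣ D ^ (p-1) := pow_dvd_pow_of_dvd h2 _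
    have h3 : w ^ p ∣ (w^2)^(p-1) := by
      rw [← pow_mul]
      exact pow_dvd_pow w (by have := hp.two_le; omega)
    exact (h3.trans h4).trans (dvd_mul_left _ _)
  set h := ∑ r ∈ range p, expand (ZMod p) p (Rr r) * X ^ r with hh
  have hdiff : ∀ r, w ^ p ∣ (expand (ZMod p) p (psect p r B) - expand (ZMod p) p (Rr r)) := by
    intro r
    rw [ZMod.expand_card, ZMod.expand_card, ← sub_pow_char]
    apply pow_dvd_pow_of_dvd
    refine ⟨(psect p r B) /ₘ w, ?_⟩
    have h5 := modByMonic_add_div (psect p r B) w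
    rw [hRr]
    linear_combination -h5
  have hwh : w ^ p ∣ h := by
    have hBh : w ^ p ∣ B - h := by
      have hsum : B - h = ∑ r ∈ range p,
          (expand (ZMod p) p (psect p r B) - expand (ZMod p) p (Rr r)) * X ^ r := by
        rw [hh]
        conv_lhs => rw [← psect_decomp hp0 B]
        rw [← Finset.sum_sub_distrib]
        exact Finset.sum_congr rfl (fun r _ => (sub_mul _ _ _).symm)
      rw [hsum]
      exact Finset.dvd_sum (fun r _ => ((hdiff r).mul_right _))
    have h6 := dvd_sub hwpB hBh
    rwa [sub_sub_cancel] at h6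
  have hh0 : h ≠ 0 := by
    intro h0
    have hR0 : Rr 0 = 0 := by
      ext k
      have h7 := coeff_sum_sections hp0 Rr (k * p)
      rw [← hh, h0] at h7
      simp only [coeff_zero] at h7
      rw [Nat.mul_mod_left, Nat.mul_div_cancel _ hp0] at h7
      simp [← h7]
    have hwN : w ∣ N := by
      rw [← hsect0]
      exact (modByMonic_eq_zero_iff_dvd hwm).mp hR0
    exact hwu (hcop.isUnit_of_dvd' hwN ((dvd_mul_left w w).trans hwd))
  have hRdeg : ∀ r, (Rr r).natDegree ≤ w.natDegree - 1 := by
    intro r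
    rcases eq_or_ne (Rr r) 0 with h0 | h0
    · simp [h0]
    · have h8 := degree_modByMonic_lt (psect p r B) hwm
      have h9 : (Rr r).natDegree < w.natDegree := natDegree_lt_natDegree h0 h8
      omega
  have hhdeg : h.natDegree ≤ p * w.natDegree - 1 := by
    rw [hh]
    apply natDegree_sum_le_of_forall_le
    intro r hr
    calc (expand (ZMod p) p (Rr r) * X ^ r).natDegree
        ≤ (expand (ZMod p) p (Rr r)).natDegree + (X ^ r : Polynomial (ZMod p)).natDegree :=
          natDegree_mul_le
    _ ≤ (Rr r).natDegree * p + r := by rw [natDegree_expand, natDegree_X_pow]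
    _ ≤ (w.natDegree - 1) * p + (p - 1) := by
        have hr1 := Finset.mem_range.mp hr
        exact Nat.add_le_add (Nat.mul_le_mul_right p (hRdeg r)) (by omega)
    _ ≤ p * w.natDegree - 1 := by
        have h1 : (w.natDegree - 1) * p + p = w.natDegree * p := by
          have hww : w.natDegree - 1 + 1 = w.natDegree := by omega
          calc (w.natDegree - 1) * p + p = (w.natDegree - 1 + 1) * p := by ring
          _ = w.natDegree * p := by rw [hww]
        have h2 : w.natDegree * p = p * w.natDegree := mul_comm _ _
        omega
  have hfinal : p * w.natDegree ≤ h.natDegree := by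
    have h10 := natDegree_le_of_dvd hwh hh0
    rwa [natDegree_pow] at h10
  have hpd : 1 ≤ p * w.natDegree := by
    calc 1 = 1*1 := by ring
    _ ≤ p * w.natDegree := Nat.mul_le_mul hp0 hd1
  omega

end GaussCong


namespace GaussCong

noncomputable section

/-- p-integral rationals -/
def padicO (p : ℕ) [Fact p.Prime] : Subring ℚ where
  carrier := {x : ℚ | ‖(x : ℚ_[p])‖ ≤ 1}
  zero_mem' := by simp
  one_mem' := by simp
  add_mem' := by
    intro a b ha hb
    simp only [Set.mem_setOf_eq, Rat.cast_add] at *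
    calc ‖(a : ℚ_[p]) + (b : ℚ_[p])‖ ≤ max ‖(a : ℚ_[p])‖ ‖(b : ℚ_[p])‖ :=
      Padic.nonarchimedean _ _
    _ ≤ 1 := max_le ha hb
  mul_mem' := by
    intro a b ha hb
    simp only [Set.mem_setOf_eq, Rat.cast_mul, norm_mul] at *
    calc ‖(a : ℚ_[p])‖ * ‖(b : ℚ_[p])‖ ≤ 1 * 1 := by
          apply mul_le_mul ha hb (norm_nonneg _) zero_le_one
    _ = 1 := by ring
  neg_mem' := by
    intro a ha
    simp only [Set.mem_setOf_eq, Rat.cast_neg, norm_neg] at *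
    exact ha

variable {p : ℕ} [Fact p.Prime]

/-- inclusion into the p-adic integers -/
def toPadicInt (p : ℕ) [Fact p.Prime] : padicO p →+* ℤ_[p] where
  toFun x := ⟨((x : ℚ) : ℚ_[p]), x.2⟩
  map_zero' := by apply Subtype.ext; push_cast; rfl
  map_one' := by apply Subtype.ext; push_cast; rfl
  map_add' x y := by apply Subtype.ext; push_cast; rfl
  map_mul' x y := by apply Subtype.ext; push_cast; rfl

/-- reduction map to `ZMod p` -/
def redO (p : ℕ) [Fact p.Prime] : padicO p →+* ZMod p :=
  (PadicInt.toZMod).comp (toPadicInt p)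

lemma mem_padicO_of_val {x : ℚ} (h : x ≠ 0 → 0 ≤ padicValRat p x) : x ∈ padicO p := by
  by_cases hx : x = 0
  · subst hx
    exact zero_mem _
  · show ‖(x : ℚ_[p])‖ ≤ 1
    rw [Padic.eq_padicNorm, padicNorm.eq_zpow_of_nonzero hx]
    push_cast
    apply zpow_le_one_of_nonpos₀
    · exact_mod_cast (Fact.out : p.Prime).one_lt.le
    · simpa using h hx

lemma mem_padicO_of_den {x : ℚ} (h : ¬ (p ∣ x.den)) : x ∈ padicO p :=
  Padic.norm_rat_le_one h

lemma redO_congr {x y : padicO p}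
    (h : (x : ℚ) = (y : ℚ) ∨ (1 : ℤ) ≤ padicValRat p ((x : ℚ) - (y : ℚ))) :
    redO p x = redO p y := by
  rcases h with h | h
  · congr 1
    exact Subtype.ext h
  · by_cases hxy : (x : ℚ) = (y : ℚ)
    · congr 1; exact Subtype.ext hxy
    have hd : (x : ℚ) - (y : ℚ) ≠ 0 := sub_ne_zero_of_ne hxy
    have hnorm : ‖(((x : ℚ) - (y : ℚ) : ℚ) : ℚ_[p])‖ < 1 := by
      rw [Padic.eq_padicNorm, padicNorm.eq_zpow_of_nonzero hd]
      push_cast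
      apply zpow_lt_one_of_neg₀
      · exact_mod_cast (Fact.out : p.Prime).one_lt
      · omega
    have hz : ‖toPadicInt p x - toPadicInt p y‖ < 1 := by
      have : ((toPadicInt p x - toPadicInt p y : ℤ_[p]) : ℚ_[p])
          = (((x : ℚ) - (y : ℚ) : ℚ) : ℚ_[p]) := by
        push_cast
        rfl
      rw [PadicInt.norm_def, this]
      exact hnorm
    obtain ⟨t, ht⟩ := (PadicInt.norm_lt_one_iff_dvd _).mp hz
    have : PadicInt.toZMod (toPadicInt p x - toPadicInt p y) = 0 := by
      rw [ht, map_mul, map_natCast, ZMod.natCast_self, zero_mul]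
    rw [map_sub] at this
    have := sub_eq_zero.mp this
    exact this

/-- common denominator of the coefficients -/
def polyDen (g : ℚ[X]) : ℕ := ∏ i ∈ range (g.natDegree + 1), (g.coeff i).den

lemma polyDen_pos (g : ℚ[X]) : 0 < polyDen g :=
  Finset.prod_pos (fun i _ => (g.coeff i).pos)

lemma den_coeff_dvd_polyDen (g : ℚ[X]) (i : ℕ) : (g.coeff i).den ∣ polyDen g := by
  by_cases hi : i < g.natDegree + 1
  · exact Finset.dvd_prod_of_mem _ (Finset.mem_range.mpr hi)
  · rw [coeff_eq_zero_of_natDegree_lt (by omega)]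
    simp

lemma coeffs_subset_padicO {g : ℚ[X]} (h : ¬ p ∣ polyDen g) :
    (↑g.coeffs : Set ℚ) ⊆ (padicO p : Set ℚ) := by
  intro x hx
  rw [Finset.mem_coe, Polynomial.mem_coeffs_iff] at hx
  obtain ⟨n, _, rfl⟩ := hx
  apply mem_padicO_of_den
  intro hd
  exact h (hd.trans (den_coeff_dvd_polyDen g n))

lemma polyCoeMap {R S : Type*} [CommRing R] [CommRing S] (σ : R →+* S) (g : R[X]) :
    ((g.map σ : S[X]) : PowerSeries S) = PowerSeries.map σ (g : PowerSeries R) := by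
  ext n
  simp [Polynomial.coeff_coe, PowerSeries.coeff_map, Polynomial.coeff_map]

lemma psMap_inj {R S : Type*} [CommRing R] [CommRing S] (σ : R →+* S)
    (hσ : Function.Injective σ) : Function.Injective (PowerSeries.map σ) := by
  intro x y h
  ext n
  apply hσ
  have := congrArg (PowerSeries.coeff n) h
  rwa [PowerSeries.coeff_map, PowerSeries.coeff_map] at this

end

end GaussCong


open GaussCong Finset

/-- The Taylor coefficients of `f` at `0` (as Laurent series coefficients). -/
noncomputable def taylorCoeff (f : RatFunc ℚ) (n : ℤ) : ℚ :=
  ((f : LaurentSeries ℚ)).coeff n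

/-- `a` is `p`-adically integral and satisfies `a_{np} ≡ a_n (mod p)`. -/
def SatisfiesModP (p : ℕ) (a : ℤ → ℚ) : Prop :=
  (∀ n : ℤ, a n ≠ 0 → 0 ≤ padicValRat p (a n)) ∧
  ∀ n : ℕ, a (n * p) = a n ∨ (1 : ℤ) ≤ padicValRat p (a (n * p) - a n)

/-- If the Taylor coefficients of `f = P/Q` satisfy `a_{np} ≡ a_n (mod p)` for almost
all primes `p`, then all poles of `f` are simple, i.e. the denominator of `f` in
lowest terms is squarefree. -/
theorem poles_are_simple (P Q : Polynomial ℤ) (hQ : Q.eval 0 ≠ 0)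
    (f : RatFunc ℚ)
    (hfPQ : f = algebraMap (Polynomial ℚ) (RatFunc ℚ) (P.map (Int.castRingHom ℚ)) /
      algebraMap (Polynomial ℚ) (RatFunc ℚ) (Q.map (Int.castRingHom ℚ)))
    (hgauss : {p : ℕ | p.Prime ∧ ¬ SatisfiesModP p (taylorCoeff f)}.Finite) :
    Squarefree f.denom := by
  classical
  have hqne : f.denom ≠ 0 := RatFunc.denom_ne_zero f
  have hQ0 : (Q.map (Int.castRingHom ℚ)).eval 0 ≠ 0 := by
    rw [Polynomial.eval_zero_map]
    simp only [eq_intCast, ne_eq, Int.cast_eq_zero]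
    exact hQ
  have hQne : Q.map (Int.castRingHom ℚ) ≠ 0 := fun h => hQ0 (by rw [h]; simp)
  have hdvd : f.denom ∣ Q.map (Int.castRingHom ℚ) :=
    (RatFunc.denom_dvd hQne).mpr ⟨P.map (Int.castRingHom ℚ), hfPQ⟩
  have hq0 : f.denom.eval 0 ≠ 0 := by
    obtain ⟨t, ht⟩ := hdvd
    intro h0
    apply hQ0
    rw [ht, eval_mul, h0, zero_mul]
  have hqconst : PowerSeries.constantCoeff (f.denom : PowerSeries ℚ) ≠ 0 := by
    rwa [Polynomial.constantCoeff_coe, Polynomial.coeff_zero_eq_eval_zero]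
  set G : PowerSeries ℚ := (f.num : PowerSeries ℚ) * (f.denom : PowerSeries ℚ)⁻¹ with hGdef
  have hGq : G * (f.denom : PowerSeries ℚ) = (f.num : PowerSeries ℚ) := by
    rw [hGdef, mul_assoc, PowerSeries.inv_mul_cancel _ hqconst, mul_one]
  have hcoe : (f : LaurentSeries ℚ) = (HahnSeries.ofPowerSeries ℤ ℚ) G := by
    have hofq : ((f.denom : PowerSeries ℚ) : LaurentSeries ℚ) ≠ 0 := by
      intro h0
      apply hqne
      have h1 : ((f.denom : PowerSeries ℚ) : LaurentSeries ℚ) = (HahnSeries.ofPowerSeries ℤ ℚ) 0 := by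
        rw [h0, map_zero]
      have h2 := HahnSeries.ofPowerSeries_injective h1
      rwa [← Polynomial.coe_eq_zero_iff]
    apply mul_right_cancel₀ hofq
    have h2 : (f : LaurentSeries ℚ) * ((f.denom : PowerSeries ℚ) : LaurentSeries ℚ)
        = ((f.num : PowerSeries ℚ) : LaurentSeries ℚ) := by
      rw [RatFunc.coe_coe, RatFunc.coe_coe, ← map_mul]
      congr 1
      have hne : algebraMap ℚ[X] (RatFunc ℚ) f.denom ≠ 0 := by
        intro h0
        exact hqne ((map_eq_zero_iff _ (IsFractionRing.injective ℚ[X] (RatFunc ℚ))).mp h0)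
      have h4 := (div_eq_iff hne).mp (RatFunc.num_div_denom f)
      show f * RatFunc.coePolynomial f.denom = RatFunc.coePolynomial f.num
      unfold RatFunc.coePolynomial
      rw [h4]
    rw [h2]
    show _ = (HahnSeries.ofPowerSeries ℤ ℚ) G * (HahnSeries.ofPowerSeries ℤ ℚ) (f.denom : PowerSeries ℚ)
    rw [← map_mul, hGq]
  have key : ∀ n : ℕ, taylorCoeff f (n : ℤ) = PowerSeries.coeff n G := by
    intro n
    rw [taylorCoeff, hcoe, HahnSeries.ofPowerSeries_apply_coeff]
  by_contra hsf
  rw [Squarefree] at hsf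
  push_neg at hsf
  obtain ⟨w₀, hw₀d, hw₀u⟩ := hsf
  have hw₀0 : w₀ ≠ 0 := by
    rintro rfl
    exact hqne (zero_dvd_iff.mp (by simpa using hw₀d))
  have hl0 : w₀.leadingCoeff ≠ 0 := leadingCoeff_ne_zero.mpr hw₀0
  set w : ℚ[X] := w₀ * C w₀.leadingCoeff⁻¹ with hwdef
  have hwm : w.Monic := monic_mul_leadingCoeff_inv hw₀0
  have hCu : IsUnit (C w₀.leadingCoeff⁻¹ : ℚ[X]) := isUnit_C.mpr (inv_ne_zero hl0).isUnit
  have hwd : w * w ∣ f.denom := by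
    have heq : w * w = (w₀ * w₀) * (C w₀.leadingCoeff⁻¹ * C w₀.leadingCoeff⁻¹) := by ring
    rw [heq]
    exact (hCu.mul hCu).mul_right_dvd.mpr hw₀d
  have hwu : ¬ IsUnit w := by
    intro hu
    apply hw₀u
    have heq : w₀ = w * C w₀.leadingCoeff := by
      rw [hwdef, mul_assoc, ← C_mul, inv_mul_cancel₀ hl0, C_1, mul_one]
    rw [heq]
    exact hu.mul (isUnit_C.mpr hl0.isUnit)
  have hd1 : 1 ≤ w.natDegree := by
    rcases Nat.eq_zero_or_pos w.natDegree with h | h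
    · exact absurd (hwm.natDegree_eq_zero.mp h ▸ isUnit_one) hwu
    · exact h
  obtain ⟨s, hws⟩ : ∃ s, f.denom = w * w * s := hwd
  obtain ⟨U, V, hUV⟩ := RatFunc.isCoprime_num_denom f
  set c : ℕ := polyDen f.num * polyDen f.denom * polyDen U * polyDen V * polyDen w * polyDen s
    with hcdef
  have hcpos : 0 < c := by
    refine Nat.mul_pos (Nat.mul_pos (Nat.mul_pos (Nat.mul_pos (Nat.mul_pos ?_ ?_) ?_) ?_) ?_) ?_ <;>
      exact polyDen_pos _
  have hcfin : ({p' : ℕ | p'.Prime ∧ p' ∣ c}).Finite := by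
    apply Set.Finite.subset (Set.finite_Icc 0 c)
    rintro x ⟨-, hx⟩
    exact Set.mem_Icc.mpr ⟨Nat.zero_le _, Nat.le_of_dvd hcpos hx⟩
  obtain ⟨p, hp, hpbad⟩ : ∃ p : ℕ, p.Prime ∧
      p ∉ ({p : ℕ | p.Prime ∧ ¬ SatisfiesModP p (taylorCoeff f)} ∪ {p' : ℕ | p'.Prime ∧ p' ∣ c}) := by
    obtain ⟨p, hp1, hp2⟩ := (Nat.infinite_setOf_prime.diff (hgauss.union hcfin)).nonempty
    exact ⟨p, hp1, hp2⟩
  haveI : Fact p.Prime := ⟨hp⟩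
  have hsat : SatisfiesModP p (taylorCoeff f) := by
    by_contra hno
    exact hpbad (Set.mem_union_left _ ⟨hp, hno⟩)
  have hpc : ¬ p ∣ c := fun hd => hpbad (Set.mem_union_right _ ⟨hp, hd⟩)
  have hdvd1 : polyDen f.num ∣ c :=
    ⟨polyDen f.denom * polyDen U * polyDen V * polyDen w * polyDen s, by rw [hcdef]; ring⟩
  have hdvd2 : polyDen f.denom ∣ c :=
    ⟨polyDen f.num * polyDen U * polyDen V * polyDen w * polyDen s, by rw [hcdef]; ring⟩
  have hdvd3 : polyDen U ∣ c :=
    ⟨polyDen f.num * polyDen f.denom * polyDen V * polyDen w * polyDen s, by rw [hcdef]; ring⟩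
  have hdvd4 : polyDen V ∣ c :=
    ⟨polyDen f.num * polyDen f.denom * polyDen U * polyDen w * polyDen s, by rw [hcdef]; ring⟩
  have hdvd5 : polyDen w ∣ c :=
    ⟨polyDen f.num * polyDen f.denom * polyDen U * polyDen V * polyDen s, by rw [hcdef]; ring⟩
  have hdvd6 : polyDen s ∣ c :=
    ⟨polyDen f.num * polyDen f.denom * polyDen U * polyDen V * polyDen w, by rw [hcdef]; ring⟩
  have hNsub := coeffs_subset_padicO (p := p) (g := f.num) (fun h => hpc (h.trans hdvd1))
  have hDsub := coeffs_subset_padicO (p := p) (g := f.denom) (fun h => hpc (h.trans hdvd2))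
  have hUsub := coeffs_subset_padicO (p := p) (g := U) (fun h => hpc (h.trans hdvd3))
  have hVsub := coeffs_subset_padicO (p := p) (g := V) (fun h => hpc (h.trans hdvd4))
  have hwsub := coeffs_subset_padicO (p := p) (g := w) (fun h => hpc (h.trans hdvd5))
  have hssub := coeffs_subset_padicO (p := p) (g := s) (fun h => hpc (h.trans hdvd6))
  have hinj : Function.Injective ((padicO p).subtype) := Subtype.coe_injective
  set NO := f.num.toSubring (padicO p) hNsub with hNO
  set DO := f.denom.toSubring (padicO p) hDsub with hDO
  set UO := U.toSubring (padicO p) hUsub with hUO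
  set VO := V.toSubring (padicO p) hVsub with hVO
  set wO := w.toSubring (padicO p) hwsub with hwO
  set sO := s.toSubring (padicO p) hssub with hsO
  have haO : ∀ n : ℕ, PowerSeries.coeff n G ∈ padicO p := by
    intro n
    rw [← key n]
    exact mem_padicO_of_val (hsat.1 n)
  set FO : PowerSeries (padicO p) :=
    PowerSeries.mk (fun n => ⟨PowerSeries.coeff n G, haO n⟩) with hFO
  have hFOmap : PowerSeries.map ((padicO p).subtype) FO = G := by
    ext n
    rw [PowerSeries.coeff_map, hFO, PowerSeries.coeff_mk]
    rfl
  have hFq_O : FO * (DO : PowerSeries (padicO p)) = (NO : PowerSeries (padicO p)) := by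
    apply psMap_inj ((padicO p).subtype) hinj
    rw [map_mul, hFOmap, ← polyCoeMap, ← polyCoeMap, hDO, hNO, map_toSubring, map_toSubring]

    exact hGq
  have hUV_O : UO * NO + VO * DO = 1 := by
    apply Polynomial.map_injective ((padicO p).subtype) hinj
    simp only [Polynomial.map_add, Polynomial.map_mul, Polynomial.map_one, hUO, hVO, hNO, hDO,
      map_toSubring]
    exact hUV
  have hws_O : DO = wO * wO * sO := by
    apply Polynomial.map_injective ((padicO p).subtype) hinj
    simp only [Polynomial.map_mul, hDO, hwO, hsO, map_toSubring]
    exact hws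
  set ψ := redO p with hψ
  set N' := NO.map ψ with hN'
  set D' := DO.map ψ with hD'
  set F' := PowerSeries.map ψ FO with hF'
  have hFD' : F' * (D' : PowerSeries (ZMod p)) = (N' : PowerSeries (ZMod p)) := by
    rw [hF', hD', hN', polyCoeMap, polyCoeMap, ← map_mul, hFq_O]
  have hcop' : IsCoprime N' D' := ⟨UO.map ψ, VO.map ψ, by
    rw [hN', hD', ← Polynomial.map_mul, ← Polynomial.map_mul, ← Polynomial.map_add, hUV_O,
      Polynomial.map_one]⟩
  have hcong' : ∀ n : ℕ, PowerSeries.coeff (n * p) F' = PowerSeries.coeff n F' := by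
    intro n
    rw [hF', PowerSeries.coeff_map, PowerSeries.coeff_map, hFO, PowerSeries.coeff_mk,
      PowerSeries.coeff_mk]
    apply redO_congr
    have h2 := hsat.2 n
    have hcast : ((n : ℤ) * (p : ℤ)) = ((n * p : ℕ) : ℤ) := by push_cast; ring
    rw [hcast, key, key] at h2
    exact h2
  have hsq : Squarefree D' := core hp N' D' F' hFD' hcop' hcong'
  have hwOm : wO.Monic := (monic_toSubring _ _ _).mpr hwm
  have hw'm : (wO.map ψ).Monic := hwOm.map ψ
  have hw'deg : (wO.map ψ).natDegree = w.natDegree := by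
    rw [hwOm.natDegree_map, natDegree_toSubring]
  have hw'u : ¬ IsUnit (wO.map ψ) := by
    apply not_isUnit_of_natDegree_pos
    omega
  apply hw'u
  apply hsq
  refine ⟨sO.map ψ, ?_⟩
  rw [hD', hws_O, Polynomial.map_mul, Polynomial.map_mul]
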